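/- The largest cardinality g(n) of a spherical two-distance set in ℝ^n satisfies g(n) ≤ n(n+3)/2. -/

import Mathlib

open RealInnerProductSpace

section aux
variable {n : ℕ}

lemma dgs_core (S : Finset (EuclideanSpace ℝ (Fin n)))
    (hunit : ∀ x ∈ S, ‖x‖ = 1) (a b : ℝ) (ha : a ≠ 1) (hb : b ≠ 1)
    (hab : ∀ x ∈ S, ∀ y ∈ S, x ≠ y → ⟪x, y⟫ = a ∨ ⟪x, y⟫ = b) :
    S.card ≤ Fintype.card (Sym2 (Fin n)) + n := by
  classical
  -- the functions
  set F : S → (S → ℝ) := fun x y => (⟪(x : EuclideanSpace ℝ (Fin n)), (y : EuclideanSpace ℝ (Fin n))⟫ - a) * (⟪(x : EuclideanSpace ℝ (Fin n)), (y : EuclideanSpace ℝ (Fin n))⟫ - b) with hF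
  set G : (Sym2 (Fin n) ⊕ Fin n) → (S → ℝ) :=
    Sum.elim
      (fun s y => Sym2.lift ⟨fun i j => (y : EuclideanSpace ℝ (Fin n)) i * (y : EuclideanSpace ℝ (Fin n)) j, fun i j => by ring⟩ s)
      (fun i y => (y : EuclideanSpace ℝ (Fin n)) i) with hG
  have hinner : ∀ x y : S, ⟪(x : EuclideanSpace ℝ (Fin n)), (y : EuclideanSpace ℝ (Fin n))⟫ = ∑ i, (x : EuclideanSpace ℝ (Fin n)) i * (y : EuclideanSpace ℝ (Fin n)) i := by
    intro x y
    simp [PiLp.inner_apply, RCLike.inner_apply]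
    exact Finset.sum_congr rfl fun i _ => mul_comm _ _
  have hself : ∀ x : S, ⟪(x : EuclideanSpace ℝ (Fin n)), (x : EuclideanSpace ℝ (Fin n))⟫ = 1 := by
    intro x
    rw [real_inner_self_eq_norm_sq, hunit x x.2]; norm_num
  have hdiag : ∀ x : S, F x x = (1 - a) * (1 - b) := by
    intro x; simp only [hF]; rw [hself x]
  have hoff : ∀ x y : S, x ≠ y → F x y = 0 := by
    intro x y hxy
    have : (x : EuclideanSpace ℝ (Fin n)) ≠ (y : EuclideanSpace ℝ (Fin n)) := fun h => hxy (Subtype.ext h)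
    rcases hab x x.2 y y.2 this with h | h <;> · simp only [hF]; rw [h]; ring
  -- linear independence
  have li : LinearIndependent ℝ F := by
    rw [Fintype.linearIndependent_iff]
    intro g hg y
    have := congrFun hg y
    simp only [Finset.sum_apply, Pi.smul_apply, smul_eq_mul, Pi.zero_apply] at this
    rw [Finset.sum_eq_single y] at this
    · rw [hdiag y] at this
      have h1 : (1 : ℝ) - a ≠ 0 := sub_ne_zero.mpr (fun h => ha h.symm)
      have h2 : (1 : ℝ) - b ≠ 0 := sub_ne_zero.mpr (fun h => hb h.symm)
      rcases mul_eq_zero.mp this with h | h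
      · exact h
      · exact absurd h (mul_ne_zero h1 h2)
    · intro x _ hxy
      rw [hoff x y hxy, mul_zero]
    · intro h; exact absurd (Finset.mem_univ y) h
  -- spanning
  have mem : ∀ x : S, F x ∈ Submodule.span ℝ (Set.range G) := by
    intro x
    have key : F x =
        (∑ i, ∑ j, ((x : EuclideanSpace ℝ (Fin n)) i * (x : EuclideanSpace ℝ (Fin n)) j) • G (Sum.inl s(i, j)))
          + (a * b) • (∑ i, G (Sum.inl s(i, i)))
          - (a + b) • (∑ i, (x : EuclideanSpace ℝ (Fin n)) i • G (Sum.inr i)) := by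
      funext y
      simp only [hF, hG, Pi.add_apply, Pi.sub_apply, Pi.smul_apply, Finset.sum_apply,
        smul_eq_mul, Sum.elim_inl, Sum.elim_inr, Sym2.lift_mk]
      have hsq : ∑ i, ∑ j, (x : EuclideanSpace ℝ (Fin n)) i * (x : EuclideanSpace ℝ (Fin n)) j * ((y : EuclideanSpace ℝ (Fin n)) i * (y : EuclideanSpace ℝ (Fin n)) j)
          = (∑ i, (x : EuclideanSpace ℝ (Fin n)) i * (y : EuclideanSpace ℝ (Fin n)) i) * (∑ j, (x : EuclideanSpace ℝ (Fin n)) j * (y : EuclideanSpace ℝ (Fin n)) j) := by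
        rw [Finset.sum_mul_sum]
        apply Finset.sum_congr rfl; intro i _
        apply Finset.sum_congr rfl; intro j _
        ring
      have h1 : ∑ i, (y : EuclideanSpace ℝ (Fin n)) i * (y : EuclideanSpace ℝ (Fin n)) i = 1 := by
        rw [← hinner y y, hself y]
      rw [hinner x y, hsq, h1]
      ring
    rw [key]
    apply sub_mem
    · apply add_mem
      · apply Submodule.sum_mem; intro i _
        apply Submodule.sum_mem; intro j _
        exact Submodule.smul_mem _ _ (Submodule.subset_span ⟨_, rfl⟩)
      · apply Submodule.smul_mem
        apply Submodule.sum_mem; intro i _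
        exact Submodule.subset_span ⟨_, rfl⟩
    · apply Submodule.smul_mem
      apply Submodule.sum_mem; intro i _
      exact Submodule.smul_mem _ _ (Submodule.subset_span ⟨_, rfl⟩)
  -- dimension counting
  set W := Submodule.span ℝ (Set.range G) with hW
  have li' : LinearIndependent ℝ (fun x : S => (⟨F x, mem x⟩ : W)) := by
    have : F = (W.subtype) ∘ (fun x : S => (⟨F x, mem x⟩ : W)) := rfl
    rw [this] at li
    exact li.of_comp W.subtype
  haveI : FiniteDimensional ℝ (S → ℝ) := inferInstance
  have hfr : Module.finrank ℝ W ≤ Fintype.card (Sym2 (Fin n) ⊕ Fin n) :=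
    finrank_range_le_card G
  have := li'.fintype_card_le_finrank
  rw [Fintype.card_coe] at this
  calc S.card ≤ Module.finrank ℝ W := this
    _ ≤ Fintype.card (Sym2 (Fin n) ⊕ Fin n) := hfr
    _ = Fintype.card (Sym2 (Fin n)) + n := by simp

end aux

/-- **Delsarte–Goethals–Seidel bound.**  Any spherical two-distance set in `ℝⁿ` has at most
`n(n+3)/2` points; hence `g(n) ≤ n(n+3)/2`. -/
theorem two_distance_set_dgs_bound {n : ℕ} (S : Finset (EuclideanSpace ℝ (Fin n)))
    (hunit : ∀ x ∈ S, ‖x‖ = 1)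
    (h2 : ∃ a b : ℝ, ∀ x ∈ S, ∀ y ∈ S, x ≠ y → ⟪x, y⟫ = a ∨ ⟪x, y⟫ = b) :
    S.card ≤ n * (n + 3) / 2 := by
  classical
  obtain ⟨a, b, hab⟩ := h2
  rcases le_or_gt S.card 1 with hc | hc
  · rcases Finset.eq_empty_or_nonempty S with h | ⟨x, hx⟩
    · simp [h]
    · have hn : n ≠ 0 := by
        intro h; subst h
        have hx0 : x = 0 := Subsingleton.elim x 0
        have := hunit x hx
        rw [hx0] at this; simp at this
      have h4 : 4 ≤ n * (n + 3) := by nlinarith [Nat.one_le_iff_ne_zero.mpr hn]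
      omega
  · -- build a', b' avoiding 1
    obtain ⟨x0, hx0, y0, hy0, hxy0⟩ := Finset.one_lt_card.mp hc
    have hlt : ∀ x ∈ S, ∀ y ∈ S, x ≠ y → ⟪x, y⟫ ≠ 1 := by
      intro x hx y hy hxy h
      exact hxy ((inner_eq_one_iff_of_norm_eq_one (hunit x hx) (hunit y hy)).mp h)
    set c := ⟪x0, y0⟫ with hcdef
    have hc1 : c ≠ 1 := hlt x0 hx0 y0 hy0 hxy0
    set a' := if a = 1 then c else a with ha'
    set b' := if b = 1 then c else b with hb'
    have ha1 : a' ≠ 1 := by rw [ha']; split <;> assumption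
    have hb1 : b' ≠ 1 := by rw [hb']; split <;> assumption
    have hab' : ∀ x ∈ S, ∀ y ∈ S, x ≠ y → ⟪x, y⟫ = a' ∨ ⟪x, y⟫ = b' := by
      intro x hx y hy hxy
      rcases hab x hx y hy hxy with h | h
      · left; rw [ha', if_neg]; exact h
        intro h1; exact hlt x hx y hy hxy (h.trans h1)
      · right; rw [hb', if_neg]; exact h
        intro h1; exact hlt x hx y hy hxy (h.trans h1)
    have := dgs_core S hunit a' b' ha1 hb1 hab'
    rw [Sym2.card, Fintype.card_fin] at this
    have hch : Nat.choose (n + 1) 2 = (n + 1) * n / 2 := by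
      rw [Nat.choose_two_right]; simp
    rw [hch] at this
    obtain ⟨k, hk⟩ := Nat.even_mul_succ_self n
    have e1 : (n + 1) * n = n * (n + 1) := Nat.mul_comm _ _
    have e2 : n * (n + 3) = n * (n + 1) + 2 * n := by ring
    omega
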